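/- Let Γ be an even Artin graph with Artin group G, g, h ∈ G, and A ⊆ V. If gG_Ag^{-1} ⊆ hG_Ah^{-1}, then gG_Ag^{-1} = hG_Ah^{-1}. -/

import Mathlib

/-- An Artin graph: a simplicial graph with even/arbitrary labels; `m u v = 0`
means `u` and `v` are not joined by an edge, otherwise `m u v ≥ 2` is the label. -/
structure ArtinGraph (V : Type) where
  m : V → V → ℕ
  symm : ∀ u v, m u v = m v u
  loopless : ∀ v, m v v = 0
  ne_one : ∀ u v, m u v ≠ 1

namespace ArtinGraph

variable {V : Type}

/-- `word u v n` is the prefix of length `n` of the alternating word `uvuv…`. -/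
def word : V → V → ℕ → FreeGroup V
  | _, _, 0 => 1
  | u, v, n + 1 => FreeGroup.of u * word v u n

/-- The Artin relations of the graph. -/
def rels (Γ : ArtinGraph V) : Set (FreeGroup V) :=
  {r | ∃ u v, Γ.m u v ≠ 0 ∧ r = word u v (Γ.m u v) * (word v u (Γ.m u v))⁻¹}

/-- The Artin group of an Artin graph. -/
def ArtinGroup (Γ : ArtinGraph V) : Type := PresentedGroup Γ.rels

instance (Γ : ArtinGraph V) : Group Γ.ArtinGroup :=
  inferInstanceAs (Group (PresentedGroup Γ.rels))

/-- The generator of the Artin group corresponding to a vertex. -/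
def gen (Γ : ArtinGraph V) (v : V) : Γ.ArtinGroup := PresentedGroup.of v

/-- The standard parabolic subgroup on a set `S` of vertices. -/
def std (Γ : ArtinGraph V) (S : Set V) : Subgroup Γ.ArtinGroup :=
  Subgroup.closure (Γ.gen '' S)

/-- The conjugate `g H g⁻¹` of a subgroup. -/
def conjP {G : Type*} [Group G] (g : G) (H : Subgroup G) : Subgroup G :=
  H.map (MulAut.conj g).toMonoidHom

/-- A parabolic subgroup is a conjugate of a standard parabolic subgroup. -/
def IsParabolic (Γ : ArtinGraph V) (P : Subgroup Γ.ArtinGroup) : Prop :=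
  ∃ (S : Set V) (g : Γ.ArtinGroup), P = conjP g (Γ.std S)

/-- An Artin graph is even if all labels are even. -/
def IsEven (Γ : ArtinGraph V) : Prop := ∀ u v, Even (Γ.m u v)

/-- The FC condition for even Artin graphs: in every triangle at least two of
the three labels are equal to `2`. -/
def IsFC (Γ : ArtinGraph V) : Prop :=
  ∀ u v w, Γ.m u v ≠ 0 → Γ.m v w ≠ 0 → Γ.m w u ≠ 0 →
    (Γ.m u v = 2 ∧ Γ.m v w = 2) ∨ (Γ.m v w = 2 ∧ Γ.m w u = 2) ∨
      (Γ.m u v = 2 ∧ Γ.m w u = 2)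

/-- The link of a vertex. -/
def lk (Γ : ArtinGraph V) (x : V) : Set V := {u | Γ.m x u ≠ 0}

/-- The star of a vertex. -/
def star (Γ : ArtinGraph V) (x : V) : Set V := insert x (Γ.lk x)

end ArtinGraph


section Aux
open ArtinGraph

variable {V : Type}

private theorem hom_word {G : Type*} [Group G] (φ : FreeGroup V →* G) (u v : V) (n : ℕ) :
    φ (word u v (2 * n)) = (φ (FreeGroup.of u) * φ (FreeGroup.of v)) ^ n := by
  induction n generalizing u v with
  | zero => simp [word]
  | succ n ih =>
      have h2 : 2 * (n + 1) = (2 * n + 1) + 1 := by ring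
      rw [h2]
      show φ (word u v ((2*n+1)+1)) = _
      rw [show word u v ((2*n+1)+1) = FreeGroup.of u * word v u (2*n+1) from rfl,
        show word v u (2*n+1) = FreeGroup.of v * word u v (2*n) from rfl]
      simp only [map_mul, ih, pow_succ']
      group


private theorem mem_conjP {G : Type*} [Group G] {a x : G} {H : Subgroup G} :
    x ∈ conjP a H ↔ a⁻¹ * x * a ∈ H := by
  constructor
  · rintro ⟨y, hy, rfl⟩
    simpa [mul_assoc] using hy
  · intro hx
    exact ⟨a⁻¹ * x * a, hx, by simp [mul_assoc]⟩

private theorem conjP_conjP {G : Type*} [Group G] (a b : G) (H : Subgroup G) :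
    conjP a (conjP b H) = conjP (a * b) H := by
  ext x
  simp [mem_conjP, mul_assoc]

private theorem conjP_self {G : Type*} [Group G] {c : G} {H : Subgroup G} (hc : c ∈ H) :
    conjP c H = H := by
  ext x
  rw [mem_conjP]
  constructor
  · intro hx
    have := H.mul_mem (H.mul_mem hc hx) (H.inv_mem hc)
    simpa [mul_assoc] using this
  · intro hx
    exact H.mul_mem (H.mul_mem (H.inv_mem hc) hx) hc

private theorem conjP_closure {G : Type*} [Group G] (a : G) (S : Set G) :
    conjP a (Subgroup.closure S) = Subgroup.closure ((fun x => a * x * a⁻¹) '' S) := by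
  rw [conjP, MonoidHom.map_closure]
  rfl


private theorem mk_gen (Γ : ArtinGraph V) (u : V) :
    PresentedGroup.mk Γ.rels (FreeGroup.of u) = Γ.gen u := rfl

private theorem braid (Γ : ArtinGraph V) {u v : V} (hm : Γ.m u v ≠ 0) :
    PresentedGroup.mk Γ.rels (word u v (Γ.m u v)) =
      PresentedGroup.mk Γ.rels (word v u (Γ.m u v)) := by
  rw [← mul_inv_eq_one, ← map_inv, ← map_mul]
  exact (QuotientGroup.eq_one_iff _).2
    (Subgroup.subset_normalClosure ⟨u, v, hm, rfl⟩)

private theorem retr_rels (Γ : ArtinGraph V) (hEven : Γ.IsEven) (A : Set V)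
    [DecidablePred (· ∈ A)] :
    ∀ r ∈ Γ.rels, FreeGroup.lift (fun v => if v ∈ A then Γ.gen v else 1) r = 1 := by
  rintro r ⟨u, v, hm, rfl⟩
  set f : V → Γ.ArtinGroup := fun v => if v ∈ A then Γ.gen v else 1 with hf
  obtain ⟨n, hn⟩ := hEven u v
  have h2 : Γ.m u v = 2 * n := by omega
  have hbraid := braid Γ hm
  rw [h2] at hbraid ⊢
  rw [hom_word (PresentedGroup.mk Γ.rels) u v n, hom_word (PresentedGroup.mk Γ.rels) v u n,
    mk_gen, mk_gen] at hbraid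
  rw [map_mul, map_inv, hom_word (FreeGroup.lift f) u v n, hom_word (FreeGroup.lift f) v u n,
    mul_inv_eq_one]
  simp only [FreeGroup.lift_apply_of, hf]
  by_cases hu : u ∈ A <;> by_cases hv : v ∈ A <;>
    simp [hu, hv, hbraid] <;> exact hbraid

end Aux

open ArtinGraph in
/-- in an even Artin group, `gG_Ag⁻¹ ⊆ hG_Ah⁻¹` implies equality. -/
theorem stmt4 {V : Type} (Γ : ArtinGraph V) (hEven : Γ.IsEven) (A : Set V)
    (g h : Γ.ArtinGroup) (hle : conjP g (Γ.std A) ≤ conjP h (Γ.std A)) :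
    conjP g (Γ.std A) = conjP h (Γ.std A) := by
  classical
  set S := Γ.std A with hS
  set k := h⁻¹ * g with hk
  have hrels := retr_rels Γ hEven A
  set ρ : Γ.ArtinGroup →* Γ.ArtinGroup := PresentedGroup.toGroup hrels with hρ
  -- ρ fixes std A elementwise
  have hfix : ∀ x ∈ S, ρ x = x := by
    intro x hx
    refine Subgroup.closure_induction ?_ (by simp) (fun a b _ _ ha hb => by
      rw [map_mul, ha, hb]) (fun a _ ha => by rw [map_inv, ha]) hx
    rintro x ⟨a, ha, rfl⟩
    show PresentedGroup.toGroup hrels (PresentedGroup.of a) = Γ.gen a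
    rw [PresentedGroup.toGroup.of]
    simp [ha]
  -- range of ρ lands in std A
  have hrange : ∀ x, ρ x ∈ S := by
    intro x
    refine PresentedGroup.generated_by Γ.rels (S.comap ρ) ?_ x
    intro j
    show PresentedGroup.toGroup hrels (PresentedGroup.of j) ∈ S
    rw [PresentedGroup.toGroup.of]
    by_cases hj : j ∈ A
    · have hg : Γ.gen j ∈ Γ.std A := Subgroup.subset_closure ⟨j, hj, rfl⟩
      simpa [hj, hS] using hg
    · simpa [hj] using one_mem S
  -- reduce to conjugation by k
  have hle' : conjP k S ≤ S := by
    have h1 : conjP h⁻¹ (conjP g S) ≤ conjP h⁻¹ (conjP h S) := Subgroup.map_mono hle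
    rw [conjP_conjP, conjP_conjP, ← hk, inv_mul_cancel, conjP_self (one_mem S)] at h1
    exact h1
  set c := ρ k with hc
  have hcS : c ∈ S := hrange k
  have key : ∀ a ∈ A, k * Γ.gen a * k⁻¹ = c * Γ.gen a * c⁻¹ := by
    intro a ha
    have hmem : k * Γ.gen a * k⁻¹ ∈ conjP k S :=
      ⟨Γ.gen a, Subgroup.subset_closure ⟨a, ha, rfl⟩, rfl⟩
    have h1 : ρ (k * Γ.gen a * k⁻¹) = k * Γ.gen a * k⁻¹ := hfix _ (hle' hmem)
    have h2 : ρ (Γ.gen a) = Γ.gen a := hfix _ (Subgroup.subset_closure ⟨a, ha, rfl⟩)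
    rw [map_mul, map_mul, map_inv, h2] at h1
    rw [← h1, hc]
  have hck : conjP k S = conjP c S := by
    rw [hS, std, conjP_closure, conjP_closure]
    congr 1
    refine Set.image_congr ?_
    rintro x ⟨a, ha, rfl⟩
    exact key a ha
  have hkS : conjP k S = S := by rw [hck, conjP_self hcS]
  calc conjP g S = conjP h (conjP k S) := by
        rw [conjP_conjP, hk, mul_inv_cancel_left]
    _ = conjP h S := by rw [hkS]
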